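/- Let k > 1 be a positive integer, p an odd prime, and r, s positive integers with r > 1 and gcd(2^r, p^s) = 1. Then the equation (2^r·k)^x + (p^s·k)^y = ((2^r + p^s)·k)^z has no positive integer solutions (x, y, z) with x > z > y. -/

import Mathlib

-- geometric sum identity in ℕ
lemma geom_id (u : ℕ) (hu : 1 ≤ u) : ∀ j : ℕ,
    (u - 1) * (∑ i ∈ Finset.range j, u ^ i) = u ^ j - 1 := by
  intro j
  induction j with
  | zero => simp
  | succ j ih =>
    rw [Finset.sum_range_succ, Nat.mul_add, ih]
    have h1 : (u - 1) * u ^ j = u ^ (j+1) - u ^ j := by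
      rw [Nat.sub_mul, one_mul, pow_succ, Nat.mul_comm]
    have h2 : 1 ≤ u ^ j := Nat.one_le_pow _ _ hu
    have h3 : u ^ j ≤ u ^ (j+1) := Nat.pow_le_pow_right hu (by omega)
    omega

lemma odd_geom_sum (u j : ℕ) (hu : Odd u) (hj : Odd j) :
    Odd (∑ i ∈ Finset.range j, u ^ i) := by
  rw [Nat.odd_iff]
  rw [Finset.sum_nat_mod]
  have : ∀ i ∈ Finset.range j, u ^ i % 2 = 1 := by
    intro i _
    exact Nat.odd_iff.mp (hu.pow)
  rw [Finset.sum_congr rfl this]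
  simp [Nat.odd_iff.mp hj]

-- odd exponent reduction
lemma odd_pow_red (u j n : ℕ) (hu : Odd u) (hj : Odd j) (h : 2 ^ n ∣ u ^ j - 1) :
    2 ^ n ∣ u - 1 := by
  have hu1 : 1 ≤ u := hu.pos
  have hgeom := geom_id u hu1 j
  have hcop : Nat.Coprime (2 ^ n) (∑ i ∈ Finset.range j, u ^ i) :=
    Nat.Coprime.pow_left _ ((odd_geom_sum u j hu hj).coprime_two_left)
  exact hcop.dvd_of_dvd_mul_right (by rw [hgeom]; exact h)

-- square split
lemma sq_split (u n : ℕ) (hu : Odd u) (h : 2 ^ n ∣ (u - 1) * (u + 1)) :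
    2 ^ (n - 1) ∣ u - 1 ∨ 2 ^ (n - 1) ∣ u + 1 := by
  obtain ⟨d, hd⟩ := hu
  rcases Nat.lt_or_ge n 3 with hn | hn
  · left
    have h2 : (2:ℕ) ^ (n-1) ∣ 2 ^ 1 := Nat.pow_dvd_pow 2 (by omega)
    exact h2.trans (by omega)
  · have h4 : (2:ℕ) ^ n = 2 ^ (n-2) * 4 := by
      rw [show (4:ℕ) = 2^2 by norm_num, ← pow_add]
      congr 1; omega
    have h21 : (2:ℕ) ^ (n-1) = 2 ^ (n-2) * 2 := by
      rw [← pow_succ]; congr 1; omega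
    have hdd : 2 ^ (n-2) ∣ d * (d + 1) := by
      have e1 : u - 1 = 2 * d := by omega
      have e2 : u + 1 = 2 * (d + 1) := by omega
      have : (u - 1) * (u + 1) = (d * (d+1)) * 4 := by rw [e1, e2]; ring
      rw [this, h4] at h
      exact (Nat.mul_dvd_mul_iff_right (by norm_num : (0:ℕ) < 4)).mp h
    rcases Nat.even_or_odd d with hde | hdo
    · left
      have hcop : Nat.Coprime (2 ^ (n-2)) (d+1) :=
        Nat.Coprime.pow_left _ ((Even.add_one hde).coprime_two_left)
      have hdvd : 2 ^ (n-2) ∣ d := hcop.dvd_of_dvd_mul_right hdd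
      rw [h21, show u - 1 = d * 2 by omega]
      exact mul_dvd_mul_right hdvd 2
    · right
      have hcop : Nat.Coprime (2 ^ (n-2)) d :=
        Nat.Coprime.pow_left _ hdo.coprime_two_left
      have hdvd : 2 ^ (n-2) ∣ d + 1 :=
        hcop.dvd_of_dvd_mul_left hdd
      rw [h21, show u + 1 = (d+1) * 2 by omega]
      exact mul_dvd_mul_right hdvd 2

-- main 2-adic lemma
lemma two_adic_pm (m : ℕ) : ∀ n c : ℕ, Odd c → 2 ^ n ∣ c ^ (2 ^ m) - 1 →
    2 ^ (n - m) ∣ c - 1 ∨ 2 ^ (n - m) ∣ c + 1 := by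
  induction m with
  | zero => intro n c _ h; left; simpa using h
  | succ m ih =>
    intro n c hc h
    rcases Nat.lt_or_ge n (m + 3) with hn | hn
    · left
      have h2 : (2:ℕ) ^ (n - (m+1)) ∣ 2 ^ 1 := Nat.pow_dvd_pow 2 (by omega)
      obtain ⟨d, hd⟩ := hc
      exact h2.trans (by omega)
    · set u := c ^ (2 ^ m) with hu
      have huodd : Odd u := hc.pow
      have hu1 : 1 ≤ u := huodd.pos
      have hsq : c ^ (2 ^ (m+1)) = u * u := by
        rw [hu, ← pow_add, pow_succ, mul_two]
      have hfac : (u - 1) * (u + 1) = u * u - 1 := by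
        have h2 : 1 ≤ u * u := Nat.one_le_iff_ne_zero.mpr (by positivity)
        zify [hu1, h2]; ring
      have h' : 2 ^ n ∣ (u - 1) * (u + 1) := by rw [hfac, ← hsq]; exact h
      rcases sq_split u n huodd h' with h1 | h1
      · have := ih (n-1) c hc h1
        rwa [show n - 1 - m = n - (m+1) by omega] at this
      · -- u + 1 case: impossible unless m = 0
        cases m with
        | zero =>
          right
          have hu' : u = c := by simp [hu]
          rwa [hu'] at h1
        | succ m' =>
          exfalso
          have hmod : u % 8 = 1 := by
            have he2 : u = (c ^ (2 ^ m')) ^ 2 := by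
              rw [hu, ← pow_mul, pow_succ]
            obtain ⟨e, he⟩ := (hc.pow : Odd (c ^ (2 ^ m')))
            rw [he2, he]
            have h5 : (2 * e + 1) ^ 2 = 4 * (e * (e+1)) + 1 := by ring
            rw [h5]
            have h6 : e * (e + 1) % 2 = 0 := Nat.even_iff.mp (Nat.even_mul_succ_self e)
            omega
          have h8 : (8:ℕ) ∣ u + 1 := by
            have h3 : (2:ℕ) ^ 3 ∣ 2 ^ (n - 1) := Nat.pow_dvd_pow 2 (by omega)
            exact (by norm_num : (8:ℕ) = 2^3) ▸ h3.trans h1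
          omega
theorem stmt_17 (k p r s : ℕ) (hk : 1 < k) (hp : p.Prime) (hpodd : Odd p)
    (hr : 1 < r) (hs : 0 < s) (hcop : Nat.Coprime (2 ^ r) (p ^ s)) :
    ¬ ∃ x y z : ℕ, 0 < x ∧ 0 < y ∧ 0 < z ∧ x > z ∧ z > y ∧
      (2 ^ r * k) ^ x + (p ^ s * k) ^ y = ((2 ^ r + p ^ s) * k) ^ z := by
  rintro ⟨x, y, z, hx0, hy0, hz0, hxz, hzy, heq⟩
  set c := 2 ^ r + p ^ s with hc
  -- basic facts
  have hp3 : 3 ≤ p := by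
    have h2 := hp.two_le; obtain ⟨e, he⟩ := hpodd; omega
  have hq3 : 3 ≤ p ^ s := le_trans hp3 (Nat.le_self_pow (by omega) p)
  have hqodd : Odd (p ^ s) := hpodd.pow
  have hr4 : 4 ≤ 2 ^ r := by
    calc (4:ℕ) = 2 ^ 2 := by norm_num
    _ ≤ 2 ^ r := Nat.pow_le_pow_right (by norm_num) hr
  have h2dvd : (2:ℕ) ∣ 2 ^ r := dvd_pow_self 2 (by omega)
  have hcodd : Odd c := by
    obtain ⟨d, hd⟩ := h2dvd
    obtain ⟨e, he⟩ := hqodd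
    rw [Nat.odd_iff]; omega
  have hc7 : 7 ≤ c := by rw [hc]; omega
  have hyx : y ≤ x := by omega
  have hyz : y ≤ z := by omega
  have hpow_pos : ∀ j : ℕ, 0 < p ^ j := fun j => Nat.pow_pos (n := j) (by omega)
  -- expand the equation
  have hE0 : 2 ^ (r*x) * k ^ x + p ^ (s*y) * k ^ y = c ^ z * k ^ z := by
    have h1 : (2 ^ r * k) ^ x = 2 ^ (r*x) * k ^ x := by rw [mul_pow, ← pow_mul]
    have h2 : (p ^ s * k) ^ y = p ^ (s*y) * k ^ y := by rw [mul_pow, ← pow_mul]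
    have h3 : (c * k) ^ z = c ^ z * k ^ z := by rw [mul_pow]
    rw [← h1, ← h2, ← h3]; exact heq
  have hE2 : 2 ^ (r*x) * k ^ (x-y) + p ^ (s*y) = c ^ z * k ^ (z-y) := by
    apply Nat.eq_of_mul_eq_mul_right (show 0 < k ^ y from Nat.pow_pos (n := y) (by omega))
    calc (2 ^ (r*x) * k ^ (x-y) + p ^ (s*y)) * k ^ y
        = 2 ^ (r*x) * (k ^ (x-y) * k ^ y) + p ^ (s*y) * k ^ y := by ring
      _ = 2 ^ (r*x) * k ^ x + p ^ (s*y) * k ^ y := by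
          rw [← pow_add, Nat.sub_add_cancel hyx]
      _ = c ^ z * k ^ z := hE0
      _ = c ^ z * (k ^ (z-y) * k ^ y) := by rw [← pow_add, Nat.sub_add_cancel hyz]
      _ = (c ^ z * k ^ (z-y)) * k ^ y := by ring
  -- k is a power of p
  have hkdvd : k ∣ p ^ (s*y) := by
    have h1 : k ∣ 2 ^ (r*x) * k ^ (x-y) :=
      Dvd.dvd.mul_left (dvd_pow_self k (by omega : x - y ≠ 0)) _
    have h2 : k ∣ c ^ z * k ^ (z-y) :=
      Dvd.dvd.mul_left (dvd_pow_self k (by omega : z - y ≠ 0)) _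
    rw [← hE2] at h2
    exact (Nat.dvd_add_right h1).mp h2
  obtain ⟨t, htle, hkt⟩ := (Nat.dvd_prime_pow hp).mp hkdvd
  have ht1 : 1 ≤ t := by
    rcases Nat.eq_zero_or_pos t with h | h
    · rw [h, pow_zero] at hkt; omega
    · exact h
  have hE3 : 2 ^ (r*x) * p ^ (t*(x-y)) + p ^ (s*y) = c ^ z * p ^ (t*(z-y)) := by
    rw [hkt, ← pow_mul, ← pow_mul] at hE2; exact hE2
  have hXgt : t*(z-y) < t*(x-y) :=
    mul_lt_mul_of_pos_left (by omega : z - y < x - y) (by omega : 0 < t)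
  -- p-adic comparison: s*y = t*(z-y)
  have hSZ : s*y = t*(z-y) := by
    rcases lt_trichotomy (s*y) (t*(z-y)) with hlt | heqq | hgt
    · exfalso
      have hd1 : p ^ (s*y+1) ∣ 2 ^ (r*x) * p ^ (t*(x-y)) :=
        Dvd.dvd.mul_left (pow_dvd_pow p (by omega)) _
      have hd3 : p ^ (s*y+1) ∣ c ^ z * p ^ (t*(z-y)) :=
        Dvd.dvd.mul_left (pow_dvd_pow p (by omega)) _
      have hdd : p ^ (s*y+1) ∣ p ^ (s*y) := by
        have h5 := Nat.dvd_sub hd3 hd1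
        rwa [show c ^ z * p ^ (t*(z-y)) - 2 ^ (r*x) * p ^ (t*(x-y)) = p ^ (s*y) by omega] at h5
      have h6 := Nat.le_of_dvd (hpow_pos _) hdd
      have h7 : p ^ (s*y) < p ^ (s*y+1) := Nat.pow_lt_pow_right (by omega) (by omega)
      omega
    · exact heqq
    · exfalso
      have hd1 : p ^ (t*(z-y)+1) ∣ 2 ^ (r*x) * p ^ (t*(x-y)) :=
        Dvd.dvd.mul_left (pow_dvd_pow p (by omega)) _
      have hd2 : p ^ (t*(z-y)+1) ∣ p ^ (s*y) := pow_dvd_pow p (by omega)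
      have hd3 : p ^ (t*(z-y)+1) ∣ c ^ z * p ^ (t*(z-y)) := by
        rw [← hE3]; exact dvd_add hd1 hd2
      have hpc : p ∣ c ^ z := by
        rw [pow_succ, mul_comm (c ^ z)] at hd3
        exact (Nat.mul_dvd_mul_iff_left (hpow_pos (t*(z-y)))).mp hd3
      have hpc2 : p ∣ c := hp.dvd_of_dvd_pow hpc
      have hpr : p ∣ 2 ^ r := by
        have hps : p ∣ p ^ s := dvd_pow_self p (by omega)
        rw [hc] at hpc2
        exact (Nat.dvd_add_left hps).mp hpc2
      have hp2 : p = 2 := (Nat.prime_dvd_prime_iff_eq hp Nat.prime_two).mp (hp.dvd_of_dvd_pow hpr)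
      obtain ⟨e, he⟩ := hpodd; omega
  -- divide by p^(s*y)
  obtain ⟨W, hW1, hE4⟩ : ∃ W : ℕ, 1 ≤ W ∧ c ^ z = 2 ^ (r*x) * p ^ W + 1 := by
    refine ⟨t*(x-y) - s*y, by omega, ?_⟩
    symm
    apply Nat.eq_of_mul_eq_mul_right (hpow_pos (s*y))
    calc (2 ^ (r*x) * p ^ (t*(x-y) - s*y) + 1) * p ^ (s*y)
        = 2 ^ (r*x) * (p ^ (t*(x-y) - s*y) * p ^ (s*y)) + p ^ (s*y) := by ring
      _ = 2 ^ (r*x) * p ^ (t*(x-y)) + p ^ (s*y) := by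
          rw [← pow_add, show (t*(x-y) - s*y) + s*y = t*(x-y) by omega]
      _ = c ^ z * p ^ (t*(z-y)) := hE3
      _ = c ^ z * p ^ (s*y) := by rw [hSZ]
  clear hE0 hE2 hE3 heq hkdvd hcop hkt htle ht1 hXgt hSZ
  -- ==================== PHASE 2 ====================
  have hz2 : 2 ≤ z := by omega
  have hxz1 : z + 1 ≤ x := by omega
  have hn1 : r*z + r ≤ r*x := by
    calc r*z + r = r*(z+1) := by ring
    _ ≤ r*x := Nat.mul_le_mul_left r hxz1
  have hrz2z : 2*z ≤ r*z := Nat.mul_le_mul_right z hr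
  have hrz2r : r*2 ≤ r*z := Nat.mul_le_mul_left r hz2
  obtain ⟨m, z1, hz1odd, hzdec⟩ := Nat.exists_eq_two_pow_mul_odd (show z ≠ 0 by omega)
  have hz1pos : 1 ≤ z1 := hz1odd.pos
  have h2mz : 2 ^ m ≤ z := by
    rw [hzdec]; exact Nat.le_mul_of_pos_right _ (by omega)
  have hmz : m + 1 ≤ z := by have := Nat.lt_two_pow_self (n := m); omega
  -- 2-adic structure of c
  have hczdvd : 2 ^ (r*x) ∣ c ^ z - 1 := ⟨p ^ W, by omega⟩
  have hred : 2 ^ (r*x) ∣ c ^ (2^m) - 1 := by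
    apply odd_pow_red _ z1 (r*x) (hcodd.pow) hz1odd
    rw [← pow_mul, ← hzdec]
    exact hczdvd
  have hdisj := two_adic_pm m (r*x) c hcodd hred
  have hclow : 2 ^ (r*x-m) ≤ c + 1 := by
    rcases hdisj with h | h
    · have := Nat.le_of_dvd (by omega) h; omega
    · exact Nat.le_of_dvd (by omega) h
  have hnm : r + m + 2 ≤ r*x := by omega
  have e1 : (2:ℕ) ^ (r*x-m) = 2 ^ (r*x-m-1) * 2 := by
    rw [← pow_succ]; congr 1; omega
  have e2 : (2:ℕ) ^ (r+1) ≤ 2 ^ (r*x-m-1) := Nat.pow_le_pow_right (by norm_num) (by omega)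
  have e3 : (2:ℕ) ^ (r+1) = 2 ^ r * 2 := by rw [pow_succ]
  have h2rz2 : 2 ≤ 2 ^ (r*z) := by
    calc (2:ℕ) = 2^1 := by norm_num
    _ ≤ 2 ^ (r*z) := Nat.pow_le_pow_right (by norm_num) (by omega)
  have hclow2 : 2 ^ (r*x-m-1) ≤ c := by
    have hp2 : (1:ℕ) ≤ 2 ^ (r*x-m-1) := Nat.one_le_two_pow
    omega
  have hczpos : 1 ≤ c ^ z := Nat.one_le_pow z c (by omega)
  -- divisibility extraction
  have hkey : ∀ V : ℕ, p ^ V ∣ p ^ W → p ^ V ∣ p ^ s → p ^ V ∣ 2 ^ (r*z) - 1 := by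
    intro V hVW hVs
    have hsub : (c - 2 ^ r) ∣ c ^ z - (2 ^ r) ^ z := Nat.sub_dvd_pow_sub_pow c (2 ^ r) z
    rw [← pow_mul] at hsub
    have hqc : c - 2 ^ r = p ^ s := by omega
    have h1 : p ^ V ∣ c ^ z - 2 ^ (r*z) := dvd_trans (hqc ▸ hVs) hsub
    have h2 : p ^ V ∣ c ^ z - 1 :=
      dvd_trans hVW ⟨2 ^ (r*x), by rw [Nat.mul_comm]; omega⟩
    have hlt : 2 ^ (r*z) < c ^ z := by
      rw [pow_mul]
      exact Nat.pow_lt_pow_left (by omega) (by omega)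
    have h3 := Nat.dvd_sub h2 h1
    have h4 : (c ^ z - 1) - (c ^ z - 2 ^ (r*z)) = 2 ^ (r*z) - 1 := by omega
    rwa [h4] at h3
  by_cases hWs : W ≤ s
  · -- CASE I
    have hdvd15 : p ^ W ∣ 2 ^ (r*z) - 1 := hkey W dvd_rfl (pow_dvd_pow p hWs)
    have hpWle : p ^ W ≤ 2 ^ (r*z) - 1 := Nat.le_of_dvd (by omega) hdvd15
    have hupper : c ^ z < 2 ^ (r*x + r*z) := by
      have ha : 2 ^ (r*x) * p ^ W ≤ 2 ^ (r*x) * (2 ^ (r*z) - 1) :=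
        Nat.mul_le_mul_left _ hpWle
      have hb : 2 ^ (r*x) * (2 ^ (r*z) - 1) + 2 ^ (r*x) = 2 ^ (r*x + r*z) := by
        zify [show (1:ℕ) ≤ 2^(r*z) by omega]
        rw [pow_add]; ring
      have hc2 : (2:ℕ) ≤ 2 ^ (r*x) := by
        calc (2:ℕ) = 2^1 := by norm_num
        _ ≤ 2 ^ (r*x) := Nat.pow_le_pow_right (by norm_num) (by omega)
      omega
    by_cases hgood : r*x + r*z ≤ (r*x - m - 1) * z
    · have hcon : 2 ^ (r*x + r*z) ≤ c ^ z := by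
        calc (2:ℕ) ^ (r*x + r*z) ≤ 2 ^ ((r*x-m-1)*z) := Nat.pow_le_pow_right (by norm_num) hgood
        _ = (2 ^ (r*x-m-1)) ^ z := by rw [← pow_mul]
        _ ≤ c ^ z := Nat.pow_le_pow_left hclow2 z
      omega
    · push_neg at hgood
      -- z must be 2
      have hzis2 : z = 2 := by
        by_contra hne
        have hz3 : 3 ≤ z := by omega
        obtain ⟨A, hA⟩ : ∃ A, r*x = A + m + 1 := ⟨r*x - m - 1, by omega⟩
        have hAval : r*x - m - 1 = A := by omega
        rw [hAval] at hgood
        have hBz : z + 2 ≤ r*z + r - z := by omega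
        have hAB : r*z + r - z ≤ A := by omega
        have m1 : (z+2) * (z-2) ≤ (r*z + r - z) * (z-2) := Nat.mul_le_mul_right _ hBz
        have m2 : (r*z + r - z) * (z-2) ≤ A * (z-2) := Nat.mul_le_mul_right _ hAB
        have m4 : 3*(z-2) ≤ z*(z-2) := Nat.mul_le_mul_right _ hz3
        have m5 : (z+2)*(z-2) = z*(z-2) + 2*(z-2) := by rw [Nat.add_mul]
        have m6 : A*(z-2) + A*2 = A*z := by
          rw [← Nat.mul_add]; congr 1; omega
        omega
      subst hzis2
      have hm1 : m = 1 := by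
        rcases m with _ | _ | m'
        · exfalso; rw [pow_zero, one_mul] at hzdec; obtain ⟨e, he⟩ := hz1odd; omega
        · rfl
        · exfalso
          have h4 : 4 ≤ 2 ^ (m' + 2) := by
            calc (4:ℕ) = 2^2 := by norm_num
            _ ≤ 2^(m'+2) := Nat.pow_le_pow_right (by norm_num) (by omega)
          have h5 : 4 ≤ 2 ^ (m'+2) * z1 := le_trans h4 (Nat.le_mul_of_pos_right _ (by omega))
          omega
      subst hm1
      have hx3 : x = 3 := by
        by_contra hxne
        have hx4 : 4 ≤ x := by omega
        have h4 : r*4 ≤ r*x := Nat.mul_le_mul_left r hx4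
        omega
      subst hx3
      have hrle3 : r ≤ 3 := by omega
      interval_cases r
      · -- r = 2
        norm_num at hE4 hpWle hclow hupper
        -- hE4 : c^2 = 64 * p^W + 1, hpWle : p^W ≤ 15, hclow : 32 ≤ c + 1
        have hc31 : c = 31 := by
          by_contra hne
          have h3 : 32 ≤ c := by omega
          have h4 : 32^2 ≤ c^2 := Nat.pow_le_pow_left h3 2
          norm_num at h4; omega
        have hc2 : c^2 = 961 := by rw [hc31]; norm_num
        have hq27 : p ^ s = 27 := by
          have : (2:ℕ)^2 = 4 := by norm_num
          omega
        have hp3' : p = 3 := by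
          have h1 : p ∣ 27 := hq27 ▸ dvd_pow_self p (by omega)
          have h2 : (27:ℕ) = 3^3 := by norm_num
          rw [h2] at h1
          exact (Nat.prime_dvd_prime_iff_eq hp Nat.prime_three).mp (hp.dvd_of_dvd_pow h1)
        have hpW15 : p ^ W = 15 := by omega
        rw [hp3'] at hpW15
        rcases W with _ | _ | _ | W'
        · norm_num at hpW15
        · norm_num at hpW15
        · norm_num at hpW15
        · have h27 : (3:ℕ)^3 ≤ 3^(W'+3) := Nat.pow_le_pow_right (by norm_num) (by omega)
          norm_num at h27; omega
      · -- r = 3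
        norm_num at hpWle hclow hE4
        -- hclow : 256 ≤ c + 1, hpWle : p^W ≤ 63, hE4 : c^2 = 512 * p^W + 1
        have h3 : 255 ≤ c := by omega
        have h4 : 255^2 ≤ c^2 := Nat.pow_le_pow_left h3 2
        norm_num at h4; omega
  · -- CASE II : s < W
    push_neg at hWs
    have hdvdq : p ^ s ∣ 2 ^ (r*z) - 1 := hkey s (pow_dvd_pow p (by omega)) dvd_rfl
    obtain ⟨h, hh⟩ := hdvdq
    have hh1 : 1 ≤ h := by
      rcases Nat.eq_zero_or_pos h with h0 | h0
      · rw [h0, mul_zero] at hh; omega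
      · exact h0
    obtain ⟨E, hE3', hEle, hdvdE⟩ :
        ∃ E : ℕ, 3 ≤ E ∧ E ≤ 2^r + 1 ∧ 2 ^ (r*x-m) ∣ p ^ s + E := by
      rcases hdisj with hd | hd
      · exact ⟨2^r - 1, by omega, by omega, by rwa [show p^s + (2^r-1) = c - 1 by omega]⟩
      · exact ⟨2^r + 1, by omega, by omega, by rwa [show p^s + (2^r+1) = c + 1 by omega]⟩
    have hqE : 2 ^ (r*x-m) ≤ p ^ s + E := Nat.le_of_dvd (by omega) hdvdE
    have hq_ge : 2 ^ (r*x-m-1) ≤ p ^ s := by omega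
    have hdvdT : 2 ^ (r*x-m) ∣ (2 ^ (r*z) - 1) + h * E := by
      have hd := hdvdE.mul_left h
      rw [Nat.mul_add] at hd
      rwa [show h * p ^ s = 2 ^ (r*z) - 1 by rw [Nat.mul_comm]; omega] at hd
    have hHE3 : 3 ≤ h*E := by
      calc (3:ℕ) = 1*3 := by norm_num
      _ ≤ h*E := Nat.mul_le_mul hh1 hE3'
    by_cases hsplit : r*x - m ≤ r*z
    · -- Sub1
      have hdvd2rz : 2 ^ (r*x-m) ∣ 2 ^ (r*z) := pow_dvd_pow 2 hsplit
      have hT2 : 2 ^ (r*x-m) ∣ h*E - 1 := by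
        have hd := Nat.dvd_sub hdvdT hdvd2rz
        rwa [show ((2 ^ (r*z) - 1) + h * E) - 2 ^ (r*z) = h*E - 1 by omega] at hd
      have hle : 2 ^ (r*x-m) ≤ h*E - 1 := Nat.le_of_dvd (by omega) hT2
      have k1 : 2 ^ (r*x-m) * 2 ^ (r*x-m-1) ≤ (h*E - 1) * p ^ s := Nat.mul_le_mul hle hq_ge
      have k2 : (h*E - 1) * p ^ s < (h*E) * p ^ s :=
        mul_lt_mul_of_pos_right (by omega) (by omega)
      have k3 : (h*E) * p ^ s = (2 ^ (r*z) - 1) * E := by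
        calc (h*E) * p ^ s = (p ^ s * h) * E := by ring
        _ = (2 ^ (r*z) - 1) * E := by rw [← hh]
      have k4 : (2 ^ (r*z) - 1) * E ≤ (2 ^ (r*z) - 1) * (2^r+1) := Nat.mul_le_mul_left _ hEle
      have k5 : (2 ^ (r*z) - 1) * (2^r+1) < 2 ^ (r*z + r + 1) := by
        have ha : (2 ^ (r*z) - 1) * (2^r+1) < 2 ^ (r*z) * (2^r+1) :=
          mul_lt_mul_of_pos_right (by omega) (by omega)
        have hb : 2 ^ (r*z) * (2^r+1) ≤ 2 ^ (r*z) * 2^(r+1) :=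
          Nat.mul_le_mul_left _ (by omega)
        have hcc : (2:ℕ) ^ (r*z) * 2^(r+1) = 2 ^ (r*z + r + 1) := by
          rw [← pow_add, Nat.add_assoc]
        omega
      have k6 : (2:ℕ) ^ ((r*x-m) + (r*x-m-1)) < 2 ^ (r*z + r + 1) := by
        rw [pow_add]; omega
      have k7 : (r*x-m) + (r*x-m-1) < r*z + r + 1 :=
        (Nat.pow_lt_pow_iff_right (by norm_num : 1 < 2)).mp k6
      omega
    · -- Sub2
      push_neg at hsplit
      have hTge : 2 ^ (r*x-m) ≤ (2 ^ (r*z) - 1) + h * E := Nat.le_of_dvd (by omega) hdvdT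
      have hrz1 : (2:ℕ) ^ (r*z+1) ≤ 2 ^ (r*x-m) := Nat.pow_le_pow_right (by norm_num) (by omega)
      have hrzpow : (2:ℕ) ^ (r*z+1) = 2 ^ (r*z) * 2 := by rw [pow_succ]
      have hEbig : 2 ^ (r*z) + 1 ≤ h * E := by omega
      have k1 : p ^ s * (2 ^ (r*z) + 1) ≤ p ^ s * (h*E) := Nat.mul_le_mul_left _ hEbig
      have k2 : p ^ s * (h*E) = (2 ^ (r*z) - 1) * E := by
        calc p ^ s * (h*E) = (p ^ s * h) * E := by ring
        _ = (2 ^ (r*z) - 1) * E := by rw [← hh]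
      have k3 : (2 ^ (r*z) - 1) * E < (2 ^ (r*z) + 1) * E :=
        mul_lt_mul_of_pos_right (by omega) (by omega)
      have k5 : p ^ s < E := by
        have k4 : (2 ^ (r*z) + 1) * p ^ s < (2 ^ (r*z) + 1) * E := by
          calc (2 ^ (r*z) + 1) * p ^ s = p ^ s * (2 ^ (r*z) + 1) := by ring
          _ ≤ p ^ s * (h*E) := k1
          _ = (2 ^ (r*z) - 1) * E := k2
          _ < (2 ^ (r*z) + 1) * E := k3
        exact Nat.lt_of_mul_lt_mul_left k4
      have k6 : (2:ℕ) ^ (r*z) ≤ 2 ^ (r*x-m-1) := Nat.pow_le_pow_right (by norm_num) (by omega)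
      have k7 : (2:ℕ) ^ (r+1) ≤ 2 ^ (r*z) := Nat.pow_le_pow_right (by norm_num) (by omega)
      omega
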